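/- Let σ_i ∈ S_{n_i} with n_i > 1 for 1 ≤ i ≤ k. Then the discrepancy of the iterated product satisfies D(σ₁ ⊗ ... ⊗ σ_k) ≤ n_k + 2·Σ_{i=1}^{k-1} n_i - 2k + 1, where D(π) = max over all pairs of intervals I, J of D_J(π(I)). -/

import Mathlib

open Finset

/-- The product `σ ⊗ τ` of `σ ∈ S_n` and `τ ∈ S_m`, as a function on `{0,...,nm-1}`. -/
def otimes (n m : ℕ) (σ τ : ℕ → ℕ) : ℕ → ℕ :=
  fun x => τ (x / n) + m * σ (x % n)

/-- Iterated (left-associated) product `σ₁ ⊗ σ₂ ⊗ ⋯ ⊗ σ_k` of a list of permutations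
(with their degrees); the result is a pair (degree, permutation). -/
def prodPerm (l : List (ℕ × (ℕ → ℕ))) : ℕ × (ℕ → ℕ) :=
  l.foldl (fun p q => (p.1 * q.1, otimes p.1 q.1 p.2 q.2)) (1, id)

/-- Discrepancy `D_T(S) = | |S ∩ T| - |S||T|/N |` for finite sets of residues mod `N`. -/
noncomputable def disc (N : ℕ) (S T : Finset ℕ) : ℝ :=
  |((S ∩ T).card : ℝ) - (S.card : ℝ) * (T.card : ℝ) / N|

/-- The (cyclic) interval of `Z_N` starting at `a` of length `len`. -/
def cycInt (N a len : ℕ) : Finset ℕ :=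
  (Finset.range len).image (fun i => (a + i) % N)

/-- `D(π)`: the maximum of `D_J(π(I))` over all intervals `I, J` of `Z_N`. -/
noncomputable def DFull (N : ℕ) (π : ℕ → ℕ) : ℝ :=
  sSup {x : ℝ | ∃ a₁ l₁ a₂ l₂, l₁ ≤ N ∧ l₂ ≤ N ∧
    x = disc N ((cycInt N a₁ l₁).image π) (cycInt N a₂ l₂)}


lemma ceil_div_le_iff {m : ℕ} (hm : 0 < m) (x s : ℕ) :
    (x + m - 1) / m ≤ s ↔ x ≤ m * s := by
  rw [Nat.div_le_iff_le_mul_add_pred hm]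
  have h1 : x + m - 1 = x + (m - 1) := by omega
  rw [h1, Nat.add_le_add_iff_right, Nat.mul_comm]

lemma le_ceil_div_iff {m : ℕ} (hm : 0 < m) (x s : ℕ) :
    s ≤ (x + m - 1) / m ↔ m * s ≤ x + m - 1 := by
  rw [Nat.le_div_iff_mul_le hm, Nat.mul_comm]

lemma class_count_bounds {m : ℕ} (hm : 0 < m) {c : ℕ} (hc : c < m) {w z : ℕ} (hwz : w ≤ z) :
    (z - w) / m ≤ (z - c + m - 1) / m - (w - c + m - 1) / m ∧
    (z - c + m - 1) / m - (w - c + m - 1) / m ≤ (z - w) / m + 1 := by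
  set s₁ := (w - c + m - 1) / m with hs₁
  set s₂ := (z - c + m - 1) / m with hs₂
  set f := (z - w) / m with hf
  clear_value s₁ s₂ f
  have h1 : w - c ≤ m * s₁ := (ceil_div_le_iff hm _ _).mp hs₁.ge
  have h2 : m * s₁ ≤ w - c + m - 1 := (le_ceil_div_iff hm _ _).mp hs₁.le
  have h3 : z - c ≤ m * s₂ := (ceil_div_le_iff hm _ _).mp hs₂.ge
  have h45 : m * f + (z - w) % m = z - w := by rw [hf]; exact Nat.div_add_mod _ _
  have h6 : (z - w) % m < m := Nat.mod_lt _ hm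
  have h0 : w ≤ c → m * s₁ = 0 := by
    intro hwc
    have : w - c = 0 := by omega
    have h00 : (0 + m - 1) / m = 0 := Nat.div_eq_of_lt (by omega)
    rw [hs₁, this, h00, Nat.mul_zero]
  have hA : s₁ + f ≤ s₂ := by
    rw [hs₂, le_ceil_div_iff hm, Nat.mul_add]
    rcases le_or_gt w c with hcw | hcw
    · have := h0 hcw
      generalize m * s₁ = M1 at this ⊢
      generalize m * f = MF at h45 ⊢
      omega
    · generalize m * s₁ = M1 at h1 h2 ⊢
      generalize m * f = MF at h45 ⊢
      omega
  have hB : s₂ ≤ s₁ + f + 1 := by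
    rw [hs₂, ceil_div_le_iff hm, Nat.mul_add, Nat.mul_add]
    generalize m * s₁ = M1 at h1 h2 ⊢
    generalize m * f = MF at h45 ⊢
    omega
  omega

/-- count of elements of `I` mapped by `f` into `T` -/
def cnt (f : ℕ → ℕ) (I T : Finset ℕ) : ℕ := ((I.image f) ∩ T).card

lemma cnt_eq_card_filter (f : ℕ → ℕ) (I T : Finset ℕ) (hf : Set.InjOn f I) :
    cnt f I T = (I.filter (fun x => f x ∈ T)).card := by
  have h : (I.image f) ∩ T = (I.filter (fun x => f x ∈ T)).image f := by
    ext y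
    simp only [Finset.mem_inter, Finset.mem_image, Finset.mem_filter]
    constructor
    · rintro ⟨⟨x, hx, rfl⟩, hyT⟩; exact ⟨x, ⟨hx, hyT⟩, rfl⟩
    · rintro ⟨x, ⟨hx, hxT⟩, rfl⟩; exact ⟨⟨x, hx, rfl⟩, hxT⟩
  rw [cnt, h]
  exact Finset.card_image_of_injOn (hf.mono (Finset.coe_subset.mpr (Finset.filter_subset _ _)))

lemma cnt_eq_sum (f : ℕ → ℕ) (I T : Finset ℕ) (hf : Set.InjOn f I) :
    (cnt f I T : ℤ) = ∑ x ∈ I, if f x ∈ T then (1:ℤ) else 0 := by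
  rw [cnt_eq_card_filter f I T hf, Finset.card_filter]
  push_cast
  rfl

lemma image_Ico_of_bijOn {σ : ℕ → ℕ} {n : ℕ} (h : Set.BijOn σ (Set.Iio n) (Set.Iio n)) :
    (Finset.Ico 0 n).image σ = Finset.Ico 0 n := by
  apply Finset.coe_injective
  rw [Finset.coe_image, Finset.coe_Ico]
  have : Set.Ico 0 n = Set.Iio n := by ext x; simp
  rw [this, h.image_eq]

lemma cnt_full {σ : ℕ → ℕ} {n : ℕ} (h : Set.BijOn σ (Set.Iio n) (Set.Iio n))
    {T : Finset ℕ} (hT : T ⊆ Finset.Ico 0 n) : cnt σ (Finset.Ico 0 n) T = T.card := by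
  rw [cnt, image_Ico_of_bijOn h, Finset.inter_eq_right.mpr hT]

lemma cnt_all {σ : ℕ → ℕ} {n : ℕ} (hσ : Set.MapsTo σ (Set.Iio n) (Set.Iio n))
    (hinj : Set.InjOn σ (Set.Iio n)) {I : Finset ℕ} (hI : I ⊆ Finset.Ico 0 n) :
    cnt σ I (Finset.Ico 0 n) = I.card := by
  rw [cnt]
  have hsub : I.image σ ⊆ Finset.Ico 0 n := by
    intro y hy
    obtain ⟨x, hx, rfl⟩ := Finset.mem_image.mp hy
    have := hI hx
    simp only [Finset.mem_Ico] at this ⊢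
    exact ⟨Nat.zero_le _, hσ this.2⟩
  rw [Finset.inter_eq_left.mpr hsub]
  exact Finset.card_image_of_injOn (hinj.mono (fun x hx => by
    simp only [Finset.mem_coe] at hx
    have h2 := hI hx
    simp only [Finset.mem_Ico] at h2
    exact h2.2))

lemma cnt_split {σ : ℕ → ℕ} {n lo hi : ℕ} (hinj : Set.InjOn σ (Set.Iio n))
    (hlo : lo ≤ hi) (hhi : hi ≤ n) (T : Finset ℕ) :
    cnt σ (Finset.Ico 0 hi) T = cnt σ (Finset.Ico 0 lo) T + cnt σ (Finset.Ico lo hi) T := by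
  have hinj' : ∀ J : Finset ℕ, J ⊆ Finset.Ico 0 n → Set.InjOn σ J := fun J hJ =>
    hinj.mono (fun x hx => by
      simp only [Finset.mem_coe] at hx
      have h2 := hJ hx
      simp only [Finset.mem_Ico] at h2
      exact h2.2)
  rw [cnt_eq_card_filter _ _ _ (hinj' _ (Finset.Ico_subset_Ico le_rfl hhi)),
      cnt_eq_card_filter _ _ _ (hinj' _ (Finset.Ico_subset_Ico le_rfl (hlo.trans hhi))),
      cnt_eq_card_filter _ _ _ (hinj' _ (Finset.Ico_subset_Ico (Nat.zero_le _) hhi)),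
      ← Finset.Ico_union_Ico_eq_Ico (Nat.zero_le lo) hlo, Finset.filter_union]
  exact Finset.card_union_of_disjoint (Finset.disjoint_filter_filter
    (Finset.Ico_disjoint_Ico_consecutive 0 lo hi))

lemma otimes_apply {n m : ℕ} (hn : 0 < n) (σ τ : ℕ → ℕ) {q r : ℕ} (hr : r < n) :
    otimes n m σ τ (q*n + r) = τ q + m * σ r := by
  have h1 : (q*n + r) / n = q := by
    rw [Nat.mul_comm, Nat.mul_add_div hn, Nat.div_eq_of_lt hr, Nat.add_zero]
  have h2 : (q*n + r) % n = r := by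
    rw [Nat.mul_comm, Nat.mul_add_mod, Nat.mod_eq_of_lt hr]
  rw [otimes, h1, h2]

lemma otimes_bijOn {n m : ℕ} (hn : 0 < n) (hm : 0 < m) {σ τ : ℕ → ℕ}
    (hσ : Set.BijOn σ (Set.Iio n) (Set.Iio n)) (hτ : Set.BijOn τ (Set.Iio m) (Set.Iio m)) :
    Set.BijOn (otimes n m σ τ) (Set.Iio (n*m)) (Set.Iio (n*m)) := by
  have key : ∀ x < n*m, x/n < m ∧ x % n < n := by
    intro x hx
    exact ⟨Nat.div_lt_of_lt_mul hx, Nat.mod_lt _ hn⟩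
  refine ⟨?_, ?_, ?_⟩
  · intro x hx
    obtain ⟨h1, h2⟩ := key x hx
    have hτx : τ (x/n) < m := hτ.mapsTo h1
    have hσx : σ (x % n) < n := hσ.mapsTo h2
    show otimes n m σ τ x < n*m
    rw [otimes]
    have h3 : m * σ (x%n) + m ≤ m * n := by
      have hs1 : σ (x%n) + 1 ≤ n := hσx
      calc m * σ (x%n) + m = m * (σ (x%n) + 1) := by ring
      _ ≤ m * n := Nat.mul_le_mul_left m hs1
    have h4 : m * n = n * m := Nat.mul_comm _ _
    omega
  · intro x hx y hy hxy
    obtain ⟨hx1, hx2⟩ := key x hx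
    obtain ⟨hy1, hy2⟩ := key y hy
    simp only [otimes] at hxy
    have hτx : τ (x/n) < m := hτ.mapsTo hx1
    have hτy : τ (y/n) < m := hτ.mapsTo hy1
    have e0x : τ (x/n) = (τ (x/n) + m * σ (x%n)) % m := by
      rw [Nat.add_mul_mod_self_left, Nat.mod_eq_of_lt hτx]
    have e0y : τ (y/n) = (τ (y/n) + m * σ (y%n)) % m := by
      rw [Nat.add_mul_mod_self_left, Nat.mod_eq_of_lt hτy]
    have e11 : τ (x/n) = τ (y/n) := by rw [e0x, hxy, ← e0y]
    have e1 : τ (x/n) = τ (y/n) ∧ σ (x % n) = σ (y % n) := by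
      refine ⟨e11, ?_⟩
      have : m * σ (x%n) = m * σ (y%n) := by omega
      exact Nat.eq_of_mul_eq_mul_left hm this
    have e2 : x / n = y / n := hτ.injOn hx1 hy1 e1.1
    have e3 : x % n = y % n := hσ.injOn hx2 hy2 e1.2
    have fx : n * (x/n) + x%n = x := Nat.div_add_mod x n
    have fy : n * (y/n) + y%n = y := Nat.div_add_mod y n
    rw [e2, e3] at fx
    omega
  · intro y hy
    have hy' : (y : ℕ) < n * m := hy
    have hc : y % m < m := Nat.mod_lt _ hm
    have hs : y / m < n := Nat.div_lt_of_lt_mul (by rwa [Nat.mul_comm] at hy')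
    obtain ⟨q, hq, hq2⟩ := hτ.surjOn hc
    obtain ⟨r, hr, hr2⟩ := hσ.surjOn hs
    have hqm : (q:ℕ) < m := hq
    have hrn : (r:ℕ) < n := hr
    refine ⟨q*n + r, ?_, ?_⟩
    · show q*n + r < n*m
      calc q*n + r < q*n + n := by omega
      _ = (q+1)*n := by ring
      _ ≤ m * n := Nat.mul_le_mul_right n (by omega)
      _ = n * m := Nat.mul_comm _ _
    · show otimes n m σ τ (q*n+r) = y
      rw [otimes_apply hn _ _ hrn, hq2, hr2]
      exact Nat.mod_add_div y m

lemma sum_range_mul_split {M : Type*} [AddCommMonoid M] (n m : ℕ) (g : ℕ → M) :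
    ∑ x ∈ Finset.range (n*m), g x = ∑ q ∈ Finset.range m, ∑ r ∈ Finset.range n, g (q*n + r) := by
  induction m with
  | zero => simp
  | succ m ih =>
    have h1 : n * (m+1) = n*m + n := by ring
    rw [h1, Finset.sum_range_add, ih, Finset.sum_range_succ]
    congr 1
    apply Finset.sum_congr rfl
    intro r _
    congr 1
    ring

lemma mem_slice_iff {m : ℕ} (hm : 0 < m) {c s w z : ℕ} (hc : c < m) :
    (w ≤ c + m*s ∧ c + m*s < z) ↔ ((w - c + m - 1)/m ≤ s ∧ s < (z - c + m - 1)/m) := by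
  have h1 : (w - c + m - 1)/m ≤ s ↔ w - c ≤ m * s := ceil_div_le_iff hm _ _
  have h3 : s < (z - c + m - 1)/m ↔ ¬ (z - c ≤ m*s) := by
    rw [← ceil_div_le_iff hm]
    omega
  rw [h1, h3]
  generalize m * s = M
  omega

lemma cnt_otimes {n m : ℕ} (hn : 0 < n) (hm : 0 < m) {σ τ : ℕ → ℕ}
    (hσ : Set.BijOn σ (Set.Iio n) (Set.Iio n)) (hτ : Set.BijOn τ (Set.Iio m) (Set.Iio m))
    (a b w z : ℕ) (hb : b ≤ n*m) :
    (cnt (otimes n m σ τ) (Finset.Ico a b) (Finset.Ico w z) : ℤ)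
      = ∑ q ∈ Finset.range m, (cnt σ (Finset.Ico (a - q*n) (min n (b - q*n)))
          (Finset.Ico ((w - τ q + m - 1)/m) ((z - τ q + m - 1)/m)) : ℤ) := by
  have hbij := otimes_bijOn hn hm hσ hτ
  have hIsub : (Finset.Ico a b : Set ℕ) ⊆ Set.Iio (n*m) := by
    intro x hx
    simp only [Finset.coe_Ico, Set.mem_Ico] at hx
    exact lt_of_lt_of_le hx.2 hb
  rw [cnt_eq_sum _ _ _ (hbij.injOn.mono hIsub)]
  have hsplit : (∑ x ∈ Finset.Ico a b, if otimes n m σ τ x ∈ Finset.Ico w z then (1:ℤ) else 0)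
      = ∑ x ∈ Finset.range (n*m), (if x ∈ Finset.Ico a b then
          (if otimes n m σ τ x ∈ Finset.Ico w z then (1:ℤ) else 0) else 0) := by
    rw [Finset.sum_ite_mem]
    congr 1
    refine (Finset.inter_eq_right.mpr ?_).symm
    intro x hx
    simp only [Finset.mem_Ico, Finset.mem_range] at *
    omega
  rw [hsplit, sum_range_mul_split]
  apply Finset.sum_congr rfl
  intro q hq
  simp only [Finset.mem_range] at hq
  have hτq : τ q < m := hτ.mapsTo hq
  have key : ∀ r : ℕ, r < n →
      ((if q*n + r ∈ Finset.Ico a b then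
          (if otimes n m σ τ (q*n + r) ∈ Finset.Ico w z then (1:ℤ) else 0) else 0)
        = (if r ∈ Finset.Ico (a - q*n) (min n (b - q*n)) then
            (if σ r ∈ Finset.Ico ((w - τ q + m - 1)/m) ((z - τ q + m - 1)/m) then (1:ℤ) else 0) else 0)) := by
    intro r hr
    have hc1 : (q*n + r ∈ Finset.Ico a b) ↔ (r ∈ Finset.Ico (a - q*n) (min n (b - q*n))) := by
      simp only [Finset.mem_Ico]
      generalize q*n = Q
      omega
    have hc2 : (otimes n m σ τ (q*n + r) ∈ Finset.Ico w z)
        ↔ (σ r ∈ Finset.Ico ((w - τ q + m - 1)/m) ((z - τ q + m - 1)/m)) := by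
      rw [otimes_apply hn _ _ hr]
      simp only [Finset.mem_Ico]
      exact mem_slice_iff hm hτq
    simp only [hc1, hc2]
  calc (∑ r ∈ Finset.range n, if q*n + r ∈ Finset.Ico a b then
          (if otimes n m σ τ (q*n + r) ∈ Finset.Ico w z then (1:ℤ) else 0) else 0)
      = ∑ r ∈ Finset.range n, (if r ∈ Finset.Ico (a - q*n) (min n (b - q*n)) then
          (if σ r ∈ Finset.Ico ((w - τ q + m - 1)/m) ((z - τ q + m - 1)/m) then (1:ℤ) else 0) else 0) := by
        apply Finset.sum_congr rfl
        intro r hr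
        exact key r (Finset.mem_range.mp hr)
    _ = ∑ r ∈ Finset.range n ∩ Finset.Ico (a - q*n) (min n (b - q*n)),
          (if σ r ∈ Finset.Ico ((w - τ q + m - 1)/m) ((z - τ q + m - 1)/m) then (1:ℤ) else 0) := by
        rw [Finset.sum_ite_mem]
    _ = ∑ r ∈ Finset.Ico (a - q*n) (min n (b - q*n)),
          (if σ r ∈ Finset.Ico ((w - τ q + m - 1)/m) ((z - τ q + m - 1)/m) then (1:ℤ) else 0) := by
        congr 1
        apply Finset.inter_eq_right.mpr
        intro x hx
        simp only [Finset.mem_Ico, Finset.mem_range] at *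
        omega
    _ = (cnt σ (Finset.Ico (a - q*n) (min n (b - q*n)))
          (Finset.Ico ((w - τ q + m - 1)/m) ((z - τ q + m - 1)/m)) : ℤ) := by
        rw [cnt_eq_sum]
        apply hσ.injOn.mono
        intro x hx
        simp only [Finset.coe_Ico, Set.mem_Ico] at hx
        exact lt_of_lt_of_le hx.2 (min_le_left _ _)

lemma slice_hi_le {m n z c : ℕ} (hm : 0 < m) (hz : z ≤ n*m) : (z - c + m - 1)/m ≤ n := by
  rw [ceil_div_le_iff hm]
  have : m * n = n * m := Nat.mul_comm _ _
  omega

lemma sum_blocks {n m : ℕ} (hn : 0 < n) (hm : 0 < m) {σ τ : ℕ → ℕ}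
    (hσ : Set.BijOn σ (Set.Iio n) (Set.Iio n)) (hτ : Set.BijOn τ (Set.Iio m) (Set.Iio m))
    {a b : ℕ} (hb : b ≤ n*m) :
    ∑ q ∈ Finset.range m, (min n (b - q*n) - (a - q*n)) = b - a := by
  have hbij := otimes_bijOn hn hm hσ hτ
  have h := cnt_otimes hn hm hσ hτ a b 0 (n*m) hb
  have hL : cnt (otimes n m σ τ) (Finset.Ico a b) (Finset.Ico 0 (n*m)) = b - a := by
    rw [cnt_all hbij.mapsTo hbij.injOn (Finset.Ico_subset_Ico (Nat.zero_le _) hb), Nat.card_Ico]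
  have hs1 : ∀ q, (0 - τ q + m - 1)/m = 0 := fun q => by
    have : (0:ℕ) - τ q = 0 := by omega
    rw [this, Nat.zero_add]
    exact Nat.div_eq_of_lt (by omega)
  have hR : ∀ q ∈ Finset.range m, (cnt σ (Finset.Ico (a - q*n) (min n (b - q*n)))
      (Finset.Ico ((0 - τ q + m - 1)/m) ((n*m - τ q + m - 1)/m)) : ℤ)
        = ((min n (b - q*n) - (a - q*n) : ℕ) : ℤ) := by
    intro q hq
    have hτq : τ q < m := hτ.mapsTo (Finset.mem_range.mp hq)
    have hs2 : (n*m - τ q + m - 1)/m = n := by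
      have h1 : n*m - τ q + m - 1 = m * n + (m - 1 - τ q) := by
        have e1 : m * n = n * m := Nat.mul_comm _ _
        have e2 : m * 1 ≤ m * n := Nat.mul_le_mul_left m hn
        omega
      rw [h1, Nat.mul_add_div hm, Nat.div_eq_of_lt (by omega), Nat.add_zero]
    rw [hs1 q, hs2]
    rw [cnt_all hσ.mapsTo hσ.injOn (Finset.Ico_subset_Ico (Nat.zero_le _) (min_le_left _ _)), Nat.card_Ico]
  rw [Finset.sum_congr rfl hR] at h
  rw [hL] at h
  exact_mod_cast h.symm

lemma sum_slices {n m : ℕ} (hn : 0 < n) (hm : 0 < m) {σ τ : ℕ → ℕ}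
    (hσ : Set.BijOn σ (Set.Iio n) (Set.Iio n)) (hτ : Set.BijOn τ (Set.Iio m) (Set.Iio m))
    {w z : ℕ} (hz : z ≤ n*m) :
    ∑ q ∈ Finset.range m, ((z - τ q + m - 1)/m - (w - τ q + m - 1)/m) = z - w := by
  have hbij := otimes_bijOn hn hm hσ hτ
  have h := cnt_otimes hn hm hσ hτ 0 (n*m) w z le_rfl
  have hL : cnt (otimes n m σ τ) (Finset.Ico 0 (n*m)) (Finset.Ico w z) = z - w := by
    rw [cnt_full hbij (Finset.Ico_subset_Ico (Nat.zero_le _) hz), Nat.card_Ico]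
  have hR : ∀ q ∈ Finset.range m, (cnt σ (Finset.Ico (0 - q*n) (min n (n*m - q*n)))
      (Finset.Ico ((w - τ q + m - 1)/m) ((z - τ q + m - 1)/m)) : ℤ)
        = (((z - τ q + m - 1)/m - (w - τ q + m - 1)/m : ℕ) : ℤ) := by
    intro q hq
    have hqm : q < m := Finset.mem_range.mp hq
    have hlo : (0:ℕ) - q*n = 0 := by omega
    have hhi : min n (n*m - q*n) = n := by
      have h1 : n * m - q * n ≥ n := by
        have : n * m = q*n + n*(m - q) := by
          have hq1 : m = q + (m - q) := by omega
          calc n * m = n * (q + (m-q)) := by rw [← hq1]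
          _ = q*n + n*(m-q) := by ring
        have h2 : n * (m - q) ≥ n * 1 := Nat.mul_le_mul_left n (by omega)
        omega
      omega
    rw [hlo, hhi]
    rw [cnt_full hσ (Finset.Ico_subset_Ico (Nat.zero_le _) (slice_hi_le hm hz)), Nat.card_Ico]
  rw [Finset.sum_congr rfl hR] at h
  rw [hL] at h
  exact_mod_cast h.symm

lemma sum_ab_bound {m n l₁ l₂ : ℕ} (hm : 0 < m) (a b : ℕ → ℕ)
    (ha : ∀ q ∈ Finset.range m, a q ≤ n)
    (hblo : ∀ q ∈ Finset.range m, l₂/m ≤ b q)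
    (hbhi : ∀ q ∈ Finset.range m, b q ≤ l₂/m + 1)
    (hsa : ∑ q ∈ Finset.range m, a q = l₁)
    (hsb : ∑ q ∈ Finset.range m, b q = l₂)
    (hl₁ : l₁ ≤ n * m) :
    |(∑ q ∈ Finset.range m, ((a q : ℝ) * (b q : ℝ))) - (l₁ : ℝ) * l₂ / m| ≤ ((m:ℝ) - 1) * n := by
  set f := l₂ / m with hf
  set r := l₂ % m with hr
  have hrm : r < m := Nat.mod_lt _ hm
  have hfr : m * f + r = l₂ := Nat.div_add_mod _ _
  set K := (Finset.range m).filter (fun q => b q = f + 1) with hKdef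
  have hKsub : K ⊆ Finset.range m := Finset.filter_subset _ _
  have hbq : ∀ q ∈ Finset.range m, b q = f + (if q ∈ K then 1 else 0) := by
    intro q hq
    by_cases hcase : b q = f + 1
    · simp [hKdef, Finset.mem_filter, hq, hcase]
    · have h1 := hblo q hq; have h2 := hbhi q hq
      have hbf : b q = f := by omega
      simp [hKdef, Finset.mem_filter, hq, hcase, hbf]
  have hKcard : K.card = r := by
    have hh : ∑ q ∈ Finset.range m, b q = ∑ q ∈ Finset.range m, (f + if q ∈ K then 1 else 0) :=
      Finset.sum_congr rfl hbq
    rw [hsb, Finset.sum_add_distrib, Finset.sum_const, Finset.card_range, smul_eq_mul,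
        Finset.sum_ite_mem, Finset.inter_eq_right.mpr hKsub, Finset.sum_const, smul_eq_mul,
        Nat.mul_one] at hh
    omega
  have hmain : (∑ q ∈ Finset.range m, ((a q : ℝ) * (b q : ℝ)))
      = (f : ℝ) * l₁ + ∑ q ∈ K, (a q : ℝ) := by
    have hpt : ∀ q ∈ Finset.range m, ((a q : ℝ) * (b q : ℝ))
        = (a q : ℝ) * (f:ℝ) + (if q ∈ K then (a q : ℝ) else 0) := by
      intro q hq
      rw [hbq q hq]
      by_cases hcase : q ∈ K <;> simp [hcase] <;> push_cast <;> ring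
    rw [Finset.sum_congr rfl hpt, Finset.sum_add_distrib]
    congr 1
    · rw [← Finset.sum_mul]
      have : (∑ q ∈ Finset.range m, (a q : ℝ)) = (l₁ : ℝ) := by
        rw [← hsa]; push_cast; rfl
      rw [this]; ring
    · rw [Finset.sum_ite_mem, Finset.inter_eq_right.mpr hKsub]
  have hA1 : (0:ℝ) ≤ ∑ q ∈ K, (a q : ℝ) := Finset.sum_nonneg (fun q _ => Nat.cast_nonneg _)
  have hA2 : (∑ q ∈ K, (a q : ℝ)) ≤ (r:ℝ) * n := by
    calc (∑ q ∈ K, (a q : ℝ)) ≤ ∑ q ∈ K, (n:ℝ) := by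
          apply Finset.sum_le_sum
          intro q hq
          exact_mod_cast ha q (hKsub hq)
    _ = (K.card : ℝ) * n := by rw [Finset.sum_const]; push_cast; ring
    _ = (r:ℝ) * n := by rw [hKcard]
  have hmR : (0:ℝ) < m := by exact_mod_cast hm
  have hl2cast : (l₂ : ℝ) = (m:ℝ) * f + r := by exact_mod_cast hfr.symm
  have htarget : (l₁ : ℝ) * l₂ / m = (f:ℝ) * l₁ + (l₁:ℝ) * r / m := by
    rw [hl2cast]; field_simp
  have hlr1 : (0:ℝ) ≤ (l₁:ℝ) * r / m := by positivity
  have hlr2 : (l₁:ℝ) * r / m ≤ (r:ℝ) * n := by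
    rw [div_le_iff₀ hmR]
    have hc1 : (l₁ : ℝ) ≤ (n:ℝ) * m := by exact_mod_cast hl₁
    nlinarith [Nat.cast_nonneg (α := ℝ) r, Nat.cast_nonneg (α := ℝ) l₁]
  have hrm1 : (r : ℝ) ≤ (m:ℝ) - 1 := by
    have : (r:ℝ) + 1 ≤ m := by exact_mod_cast hrm
    linarith
  have hn0 : (0:ℝ) ≤ n := Nat.cast_nonneg _
  rw [hmain, htarget, abs_le]
  constructor <;> nlinarith [hA1, hA2, hlr1, hlr2, hrm1, hn0]

/-- The hypothesis predicate: discrepancy bound for initial/final intervals I. -/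
def Bnd (n : ℕ) (σ : ℕ → ℕ) (B : ℝ) : Prop :=
  ∀ u v w z : ℕ, v ≤ n → z ≤ n → (u = 0 ∨ v = n) →
    |((cnt σ (Finset.Ico u v) (Finset.Ico w z) : ℝ))
      - ((v - u : ℕ) : ℝ) * ((z - w : ℕ) : ℝ) / n| ≤ B

lemma cnt_empty (f : ℕ → ℕ) {lo hi : ℕ} (h : hi ≤ lo) (T : Finset ℕ) :
    cnt f (Finset.Ico lo hi) T = 0 := by
  rw [cnt, Finset.Ico_eq_empty (by omega)]
  simp

lemma Bnd_nonneg {n : ℕ} {σ : ℕ → ℕ} {B : ℝ} (hB : Bnd n σ B) : 0 ≤ B := by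
  have := hB 0 0 0 0 (Nat.zero_le _) (Nat.zero_le _) (Or.inl rfl)
  calc (0:ℝ) ≤ |((cnt σ (Finset.Ico 0 0) (Finset.Ico 0 0) : ℝ))
      - ((0 - 0 : ℕ) : ℝ) * ((0 - 0 : ℕ) : ℝ) / n| := abs_nonneg _
  _ ≤ B := this

/-- per-block error term -/
noncomputable def blkErr (n m : ℕ) (σ τ : ℕ → ℕ) (a b w z q : ℕ) : ℝ :=
  (cnt σ (Finset.Ico (a - q*n) (min n (b - q*n)))
      (Finset.Ico ((w - τ q + m - 1)/m) ((z - τ q + m - 1)/m)) : ℝ)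
    - ((min n (b - q*n) - (a - q*n) : ℕ) : ℝ)
        * (((z - τ q + m - 1)/m - (w - τ q + m - 1)/m : ℕ) : ℝ) / n

lemma blkErr_le_B {n m : ℕ} (hm : 0 < m) {σ τ : ℕ → ℕ} {B : ℝ} (hB : Bnd n σ B)
    {a b w z q : ℕ} (hz : z ≤ n*m)
    (hq : a - q*n = 0 ∨ min n (b - q*n) = n) :
    |blkErr n m σ τ a b w z q| ≤ B :=
  hB _ _ _ _ (min_le_left _ _) (slice_hi_le hm hz) hq

lemma blkErr_empty {n m : ℕ} {σ τ : ℕ → ℕ} {a b w z q : ℕ}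
    (h : min n (b - q*n) ≤ a - q*n) : blkErr n m σ τ a b w z q = 0 := by
  rw [blkErr, cnt_empty _ h]
  have h2 : (min n (b - q*n) - (a - q*n) : ℕ) = 0 := by omega
  rw [h2]
  simp

lemma blkErr_full {n m : ℕ} (hn : 0 < n) (hm : 0 < m) {σ τ : ℕ → ℕ}
    (hσ : Set.BijOn σ (Set.Iio n) (Set.Iio n)) {a b w z q : ℕ} (hz : z ≤ n*m)
    (hlo : a - q*n = 0) (hhi : min n (b - q*n) = n) : blkErr n m σ τ a b w z q = 0 := by
  rw [blkErr, hlo, hhi]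
  rw [cnt_full hσ (Finset.Ico_subset_Ico (Nat.zero_le _) (slice_hi_le hm hz)), Nat.card_Ico]
  have h2 : (n - 0 : ℕ) = n := by omega
  rw [h2]
  have hnR : (n:ℝ) ≠ 0 := by positivity
  field_simp
  ring

lemma blkErr_le_2B {n m : ℕ} (hn : 0 < n) (hm : 0 < m) {σ τ : ℕ → ℕ}
    (hσ : Set.BijOn σ (Set.Iio n) (Set.Iio n)) {B : ℝ} (hB : Bnd n σ B)
    {a b w z q : ℕ} (hz : z ≤ n*m) :
    |blkErr n m σ τ a b w z q| ≤ 2*B := by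
  set lo := a - q*n with hlo
  set hi := min n (b - q*n) with hhi
  rcases le_or_gt hi lo with hcase | hcase
  · rw [blkErr_empty hcase, abs_zero]
    have := Bnd_nonneg hB
    linarith
  · have hhin : hi ≤ n := min_le_left _ _
    have hsplit := cnt_split (lo := lo) (hi := hi) hσ.injOn hcase.le hhin
      (Finset.Ico ((w - τ q + m - 1)/m) ((z - τ q + m - 1)/m))
    have e1 := hB 0 hi ((w - τ q + m - 1)/m) ((z - τ q + m - 1)/m) hhin (slice_hi_le hm hz) (Or.inl rfl)
    have e2 := hB 0 lo ((w - τ q + m - 1)/m) ((z - τ q + m - 1)/m) (by omega) (slice_hi_le hm hz) (Or.inl rfl)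
    rw [blkErr]
    set s1 := (w - τ q + m - 1)/m
    set s2 := (z - τ q + m - 1)/m
    set t := ((s2 - s1 : ℕ) : ℝ) with ht
    simp only [Nat.sub_zero] at e1 e2
    have hcast : (cnt σ (Finset.Ico lo hi) (Finset.Ico s1 s2) : ℝ)
        = (cnt σ (Finset.Ico 0 hi) (Finset.Ico s1 s2) : ℝ)
          - (cnt σ (Finset.Ico 0 lo) (Finset.Ico s1 s2) : ℝ) := by
      rw [hsplit]
      push_cast
      ring
    have c1 : ((hi - lo : ℕ) : ℝ) = (hi : ℝ) - (lo : ℝ) := by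
      rw [Nat.cast_sub hcase.le]
    rw [hcast, c1]
    have hX : (cnt σ (Finset.Ico 0 hi) (Finset.Ico s1 s2) : ℝ)
          - (cnt σ (Finset.Ico 0 lo) (Finset.Ico s1 s2) : ℝ)
          - ((hi : ℝ) - (lo : ℝ)) * t / n
        = ((cnt σ (Finset.Ico 0 hi) (Finset.Ico s1 s2) : ℝ) - (hi : ℝ) * t / n)
          - ((cnt σ (Finset.Ico 0 lo) (Finset.Ico s1 s2) : ℝ) - (lo : ℝ) * t / n) := by
      ring
    rw [hX]
    calc |((cnt σ (Finset.Ico 0 hi) (Finset.Ico s1 s2) : ℝ) - (hi : ℝ) * t / n)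
          - ((cnt σ (Finset.Ico 0 lo) (Finset.Ico s1 s2) : ℝ) - (lo : ℝ) * t / n)|
        ≤ |((cnt σ (Finset.Ico 0 hi) (Finset.Ico s1 s2) : ℝ) - (hi : ℝ) * t / n)|
          + |((cnt σ (Finset.Ico 0 lo) (Finset.Ico s1 s2) : ℝ) - (lo : ℝ) * t / n)| := abs_sub _ _
    _ ≤ B + B := add_le_add e1 e2
    _ = 2*B := by ring

lemma cnt_master {n m : ℕ} (hn : 0 < n) (hm : 0 < m) {σ τ : ℕ → ℕ}
    (hσ : Set.BijOn σ (Set.Iio n) (Set.Iio n)) (hτ : Set.BijOn τ (Set.Iio m) (Set.Iio m))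
    (a b w z : ℕ) (hab : a ≤ b) (hb : b ≤ n*m) (hwz : w ≤ z) (hz : z ≤ n*m)
    {E : ℝ} (hE : |∑ q ∈ Finset.range m, blkErr n m σ τ a b w z q| ≤ E) :
    |((cnt (otimes n m σ τ) (Finset.Ico a b) (Finset.Ico w z)) : ℝ)
      - ((b - a : ℕ):ℝ) * ((z - w : ℕ):ℝ) / ((n:ℝ)*(m:ℝ))| ≤ E + ((m:ℝ) - 1) := by
  have hnR : (0:ℝ) < n := by exact_mod_cast hn
  have hmR : (0:ℝ) < m := by exact_mod_cast hm
  have h0 := cnt_otimes hn hm hσ hτ a b w z hb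
  have hcast : ((cnt (otimes n m σ τ) (Finset.Ico a b) (Finset.Ico w z)) : ℝ)
      = ∑ q ∈ Finset.range m, ((cnt σ (Finset.Ico (a - q*n) (min n (b - q*n)))
          (Finset.Ico ((w - τ q + m - 1)/m) ((z - τ q + m - 1)/m)) : ℕ) : ℝ) := by
    exact_mod_cast h0
  have hsum : (∑ q ∈ Finset.range m, blkErr n m σ τ a b w z q)
      = ((cnt (otimes n m σ τ) (Finset.Ico a b) (Finset.Ico w z)) : ℝ)
        - ∑ q ∈ Finset.range m, ((min n (b - q*n) - (a - q*n) : ℕ) : ℝ)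
            * (((z - τ q + m - 1)/m - (w - τ q + m - 1)/m : ℕ) : ℝ) / n := by
    rw [hcast, ← Finset.sum_sub_distrib]
    rfl
  have h2 : |(∑ q ∈ Finset.range m, ((min n (b - q*n) - (a - q*n) : ℕ) : ℝ)
            * (((z - τ q + m - 1)/m - (w - τ q + m - 1)/m : ℕ) : ℝ) / n)
        - ((b - a : ℕ):ℝ) * ((z - w : ℕ):ℝ) / ((n:ℝ)*(m:ℝ))| ≤ (m:ℝ) - 1 := by
    have hab2 := sum_ab_bound (n := n) (l₁ := b - a) (l₂ := z - w) hm
      (fun q => min n (b - q*n) - (a - q*n))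
      (fun q => (z - τ q + m - 1)/m - (w - τ q + m - 1)/m)
      (fun q _ => by show n ⊓ (b - q*n) - (a - q*n) ≤ n; omega)
      (fun q hq => (class_count_bounds hm (hτ.mapsTo (Finset.mem_range.mp hq)) hwz).1)
      (fun q hq => (class_count_bounds hm (hτ.mapsTo (Finset.mem_range.mp hq)) hwz).2)
      (sum_blocks hn hm hσ hτ hb) (sum_slices hn hm hσ hτ hz) (by omega)
    have e1 : (∑ q ∈ Finset.range m, ((min n (b - q*n) - (a - q*n) : ℕ) : ℝ)
            * (((z - τ q + m - 1)/m - (w - τ q + m - 1)/m : ℕ) : ℝ) / n)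
        = (∑ q ∈ Finset.range m, ((min n (b - q*n) - (a - q*n) : ℕ) : ℝ)
            * (((z - τ q + m - 1)/m - (w - τ q + m - 1)/m : ℕ) : ℝ)) / n := by
      rw [Finset.sum_div]
    have e2 : ((b - a : ℕ):ℝ) * ((z - w : ℕ):ℝ) / ((n:ℝ)*(m:ℝ))
        = (((b - a : ℕ):ℝ) * ((z - w : ℕ):ℝ) / (m:ℝ)) / n := by
      rw [mul_comm (n:ℝ) (m:ℝ)]
      exact (div_div _ _ _).symm
    rw [e1, e2, div_sub_div_same, abs_div, abs_of_pos hnR]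
    rw [div_le_iff₀ hnR]
    calc |(∑ q ∈ Finset.range m, ((min n (b - q*n) - (a - q*n) : ℕ) : ℝ)
            * (((z - τ q + m - 1)/m - (w - τ q + m - 1)/m : ℕ) : ℝ))
          - ((b - a : ℕ):ℝ) * ((z - w : ℕ):ℝ) / (m:ℝ)| ≤ ((m:ℝ)-1) * n := hab2
    _ = ((m:ℝ)-1) * n := rfl
  have hfinal : ((cnt (otimes n m σ τ) (Finset.Ico a b) (Finset.Ico w z)) : ℝ)
      - ((b - a : ℕ):ℝ) * ((z - w : ℕ):ℝ) / ((n:ℝ)*(m:ℝ))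
      = (∑ q ∈ Finset.range m, blkErr n m σ τ a b w z q)
        + ((∑ q ∈ Finset.range m, ((min n (b - q*n) - (a - q*n) : ℕ) : ℝ)
            * (((z - τ q + m - 1)/m - (w - τ q + m - 1)/m : ℕ) : ℝ) / n)
          - ((b - a : ℕ):ℝ) * ((z - w : ℕ):ℝ) / ((n:ℝ)*(m:ℝ))) := by
    rw [hsum]
    ring
  rw [hfinal]
  calc |_ + _| ≤ _ := abs_add_le _ _
  _ ≤ E + ((m:ℝ)-1) := add_le_add hE h2


lemma mulLeRNat {p q : ℕ} (h : p ≤ q) (k : ℕ) : p * k ≤ q * k :=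
  Nat.mul_le_mul_right k h
section Classify

variable {n m : ℕ} {σ τ : ℕ → ℕ} {a b w z : ℕ}

lemma block_arith (hn : 0 < n) (q : ℕ) :
    ((a/n)*n ≤ a ∧ a < (a/n)*n + n) ∧ ((b/n)*n ≤ b ∧ b < (b/n)*n + n) ∧ (q+1)*n = q*n + n := by
  have h1 := Nat.div_add_mod a n
  have h2 := Nat.div_add_mod b n
  have h3 : a % n < n := Nat.mod_lt _ hn
  have h4 : b % n < n := Nat.mod_lt _ hn
  have e1 : (a/n)*n = n*(a/n) := Nat.mul_comm _ _
  have e2 : (b/n)*n = n*(b/n) := Nat.mul_comm _ _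
  refine ⟨⟨by omega, by omega⟩, ⟨by omega, by omega⟩, by ring⟩

lemma blkErr_classify (hn : 0 < n) (hm : 0 < m)
    (hσ : Set.BijOn σ (Set.Iio n) (Set.Iio n)) (hz : z ≤ n*m)
    {q : ℕ} (hq1 : q ≠ a/n) (hq2 : q ≠ b/n) (hab : a ≤ b) :
    blkErr n m σ τ a b w z q = 0 := by
  obtain ⟨⟨ha1, ha2⟩, ⟨hb1, hb2⟩, hq3⟩ := block_arith (a := a) (b := b) hn q
  rcases Nat.lt_or_ge q (a/n) with hc | hc
  · -- q < a/n : empty block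
    apply blkErr_empty
    have h5 : (q+1)*n ≤ (a/n)*n := mulLeRNat (by omega) n
    omega
  · rcases Nat.lt_or_ge (b/n) q with hc2 | hc2
    · -- q > b/n : empty block
      apply blkErr_empty
      have h5 : (b/n + 1)*n ≤ q*n := mulLeRNat (by omega) n
      have h6 : (b/n + 1)*n = (b/n)*n + n := by ring
      omega
    · -- a/n < q < b/n : full block
      have hca : a/n < q := by omega
      have hcb : q < b/n := by omega
      apply blkErr_full hn hm hσ hz
      · have h5 : (a/n + 1)*n ≤ q*n := mulLeRNat (by omega) n
        have h6 : (a/n + 1)*n = (a/n)*n + n := by ring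
        omega
      · have h5 : (q+1)*n ≤ (b/n)*n := mulLeRNat (by omega) n
        omega

lemma abs_sum_blkErr_le {S : Finset ℕ} {c : ℕ} (f : ℕ → ℝ) (hS : S ⊆ {c}) {D : ℝ}
    (hc : |f c| ≤ D) (hD : 0 ≤ D) : |∑ q ∈ S, f q| ≤ D := by
  rcases Finset.subset_singleton_iff.mp hS with h | h
  · rw [h]; simpa using hD
  · rw [h, Finset.sum_singleton]; exact hc

lemma sum_blkErr_init (hn : 0 < n) (hm : 0 < m)
    (hσ : Set.BijOn σ (Set.Iio n) (Set.Iio n)) {B : ℝ} (hB : Bnd n σ B)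
    (hab : a ≤ b) (hb : b ≤ n*m) (hz : z ≤ n*m) (hflag : a = 0 ∨ b = n*m) :
    |∑ q ∈ Finset.range m, blkErr n m σ τ a b w z q| ≤ B := by
  have hB0 := Bnd_nonneg hB
  rcases hflag with rfl | rfl
  · -- a = 0 : only block b/n matters
    have hzero : ∀ q ∈ Finset.range m, q ∉ Finset.range m ∩ {b/n} → blkErr n m σ τ 0 b w z q = 0 := by
      intro q hq hq2
      have hqb : q ≠ b/n := by
        intro h
        exact hq2 (Finset.mem_inter.mpr ⟨hq, by simp [h]⟩)
      obtain ⟨⟨_, _⟩, ⟨hb1, hb2⟩, _⟩ := block_arith (a := 0) (b := b) hn q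
      rcases Nat.lt_or_ge q (b/n) with hc | hc
      · apply blkErr_full hn hm hσ hz (by omega)
        have h5 : (q+1)*n ≤ (b/n)*n := mulLeRNat (by omega) n
        have h6 : (q+1)*n = q*n + n := by ring
        omega
      · apply blkErr_empty
        have h5 : (b/n + 1)*n ≤ q*n := mulLeRNat (by omega) n
        have h6 : (b/n + 1)*n = (b/n)*n + n := by ring
        omega
    rw [← Finset.sum_subset Finset.inter_subset_left hzero]
    exact abs_sum_blkErr_le _ Finset.inter_subset_right
      (blkErr_le_B hm hB hz (Or.inl (by omega))) hB0
  · -- b = n*m : only block a/n matters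
    have hzero : ∀ q ∈ Finset.range m, q ∉ Finset.range m ∩ {a/n} → blkErr n m σ τ a (n*m) w z q = 0 := by
      intro q hq hq2
      have hqa : q ≠ a/n := by
        intro h
        exact hq2 (Finset.mem_inter.mpr ⟨hq, by simp [h]⟩)
      have hqm : q < m := Finset.mem_range.mp hq
      have hfull : min n (n*m - q*n) = n := by
        have h5 : (q+1)*n ≤ m*n := mulLeRNat (by omega) n
        have h6 : (q+1)*n = q*n + n := by ring
        have h7 : m*n = n*m := Nat.mul_comm _ _
        omega
      obtain ⟨⟨ha1, ha2⟩, _, _⟩ := block_arith (a := a) (b := n*m) hn q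
      rcases Nat.lt_or_ge q (a/n) with hc | hc
      · apply blkErr_empty
        have h5 : (q+1)*n ≤ (a/n)*n := mulLeRNat (by omega) n
        have h6 : (q+1)*n = q*n + n := by ring
        omega
      · apply blkErr_full hn hm hσ hz _ hfull
        have h5 : (a/n + 1)*n ≤ q*n := mulLeRNat (by omega) n
        have h6 : (a/n + 1)*n = (a/n)*n + n := by ring
        omega
    rw [← Finset.sum_subset Finset.inter_subset_left hzero]
    by_cases hmem : a/n ∈ Finset.range m
    · have : Finset.range m ∩ {a/n} = {a/n} := by
        rw [Finset.inter_eq_right]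
        simpa using hmem
      rw [this, Finset.sum_singleton]
      apply blkErr_le_B hm hB hz
      right
      have hqm : a/n < m := Finset.mem_range.mp hmem
      have h5 : (a/n+1)*n ≤ m*n := mulLeRNat (by omega) n
      have h6 : (a/n+1)*n = (a/n)*n + n := by ring
      have h7 : m*n = n*m := Nat.mul_comm _ _
      omega
    · have : Finset.range m ∩ {a/n} = ∅ := Finset.inter_singleton_of_notMem hmem
      rw [this, Finset.sum_empty, abs_zero]
      exact hB0

end Classify

lemma sum_blkErr_gen {n m : ℕ} {σ τ : ℕ → ℕ} {a b w z : ℕ} (hn : 0 < n) (hm : 0 < m)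
    (hσ : Set.BijOn σ (Set.Iio n) (Set.Iio n)) {B : ℝ} (hB : Bnd n σ B)
    (hab : a ≤ b) (hb : b ≤ n*m) (hz : z ≤ n*m) :
    |∑ q ∈ Finset.range m, blkErr n m σ τ a b w z q| ≤ 2*B := by
  have hB0 := Bnd_nonneg hB
  have hzero : ∀ q ∈ Finset.range m, q ∉ Finset.range m ∩ ({a/n, b/n} : Finset ℕ) →
      blkErr n m σ τ a b w z q = 0 := by
    intro q hq hq2
    have h3 : q ≠ a/n ∧ q ≠ b/n := by
      constructor <;> intro h <;> exact hq2 (Finset.mem_inter.mpr ⟨hq, by simp [h]⟩)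
    exact blkErr_classify hn hm hσ hz h3.1 h3.2 hab
  rw [← Finset.sum_subset Finset.inter_subset_left hzero]
  by_cases hqq : a/n = b/n
  · -- single partial block
    have hsub : Finset.range m ∩ ({a/n, b/n} : Finset ℕ) ⊆ {a/n} := by
      intro x hx
      simp only [Finset.mem_inter, Finset.mem_insert, Finset.mem_singleton] at hx
      simp only [Finset.mem_singleton]
      omega
    exact abs_sum_blkErr_le _ hsub (blkErr_le_2B hn hm hσ hB hz) (by linarith)
  · -- two partial blocks, a/n < b/n
    have hlt : a/n < b/n := by
      have := Nat.div_le_div_right (c := n) hab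
      omega
    have e1 : |blkErr n m σ τ a b w z (a/n)| ≤ B := by
      apply blkErr_le_B hm hB hz
      right
      obtain ⟨⟨ha1, ha2⟩, ⟨hb1, hb2⟩, _⟩ := block_arith (a := a) (b := b) hn 0
      have h5 : (a/n+1)*n ≤ (b/n)*n := mulLeRNat (by omega) n
      have h6 : (a/n+1)*n = (a/n)*n + n := by ring
      omega
    have e2 : |blkErr n m σ τ a b w z (b/n)| ≤ B := by
      apply blkErr_le_B hm hB hz
      left
      obtain ⟨⟨ha1, ha2⟩, ⟨hb1, hb2⟩, _⟩ := block_arith (a := a) (b := b) hn 0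
      have h5 : (a/n+1)*n ≤ (b/n)*n := mulLeRNat (by omega) n
      have h6 : (a/n+1)*n = (a/n)*n + n := by ring
      omega
    calc |∑ q ∈ Finset.range m ∩ ({a/n, b/n} : Finset ℕ), blkErr n m σ τ a b w z q|
        ≤ ∑ q ∈ Finset.range m ∩ ({a/n, b/n} : Finset ℕ), |blkErr n m σ τ a b w z q| :=
          Finset.abs_sum_le_sum_abs _ _
    _ ≤ ∑ q ∈ ({a/n, b/n} : Finset ℕ), |blkErr n m σ τ a b w z q| :=
          Finset.sum_le_sum_of_subset_of_nonneg Finset.inter_subset_right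
            (fun _ _ _ => abs_nonneg _)
    _ = |blkErr n m σ τ a b w z (a/n)| + |blkErr n m σ τ a b w z (b/n)| :=
          Finset.sum_pair hqq
    _ ≤ B + B := add_le_add e1 e2
    _ = 2*B := by ring

/-- main step: initial/final-interval discrepancy of the product -/
lemma Bnd_step {n m : ℕ} (hn : 0 < n) (hm : 0 < m) {σ τ : ℕ → ℕ}
    (hσ : Set.BijOn σ (Set.Iio n) (Set.Iio n)) (hτ : Set.BijOn τ (Set.Iio m) (Set.Iio m))
    {B : ℝ} (hB : Bnd n σ B) :
    Bnd (n*m) (otimes n m σ τ) (B + ((m:ℝ) - 1)) := by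
  intro u v w z hv hz hflag
  have hB0 := Bnd_nonneg hB
  have hm1 : (1:ℝ) ≤ (m:ℝ) := by exact_mod_cast hm
  have hRHS : 0 ≤ B + ((m:ℝ)-1) := by linarith
  rcases Nat.lt_or_ge v u with hvu | hvu
  · rw [cnt_empty _ (by omega), show (v - u : ℕ) = 0 by omega]
    simpa using hRHS
  rcases Nat.lt_or_ge z w with hzw | hzw
  · have : Finset.Ico w z = ∅ := Finset.Ico_eq_empty (by omega)
    rw [cnt, this, Finset.inter_empty, Finset.card_empty, show (z - w : ℕ) = 0 by omega]
    simpa using hRHS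
  have hcast : ((n*m : ℕ) : ℝ) = (n:ℝ)*(m:ℝ) := by push_cast; rfl
  rw [hcast]
  exact cnt_master hn hm hσ hτ u v w z hvu hv hzw hz
    (sum_blkErr_init hn hm hσ hB hvu hv hz hflag)

/-- general-interval discrepancy of the product -/
lemma gen_step {n m : ℕ} (hn : 0 < n) (hm : 0 < m) {σ τ : ℕ → ℕ}
    (hσ : Set.BijOn σ (Set.Iio n) (Set.Iio n)) (hτ : Set.BijOn τ (Set.Iio m) (Set.Iio m))
    {B : ℝ} (hB : Bnd n σ B) (a b w z : ℕ) (hb : b ≤ n*m) (hz : z ≤ n*m) :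
    |((cnt (otimes n m σ τ) (Finset.Ico a b) (Finset.Ico w z)) : ℝ)
      - ((b - a : ℕ):ℝ) * ((z - w : ℕ):ℝ) / (((n*m : ℕ)):ℝ)| ≤ 2*B + ((m:ℝ) - 1) := by
  have hB0 := Bnd_nonneg hB
  have hm1 : (1:ℝ) ≤ (m:ℝ) := by exact_mod_cast hm
  have hRHS : 0 ≤ 2*B + ((m:ℝ)-1) := by linarith
  rcases Nat.lt_or_ge b a with hvu | hvu
  · rw [cnt_empty _ (by omega), show (b - a : ℕ) = 0 by omega]
    simpa using hRHS
  rcases Nat.lt_or_ge z w with hzw | hzw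
  · have : Finset.Ico w z = ∅ := Finset.Ico_eq_empty (by omega)
    rw [cnt, this, Finset.inter_empty, Finset.card_empty, show (z - w : ℕ) = 0 by omega]
    simpa using hRHS
  have hcast : ((n*m : ℕ) : ℝ) = (n:ℝ)*(m:ℝ) := by push_cast; rfl
  rw [hcast]
  exact cnt_master hn hm hσ hτ a b w z hvu hb hzw hz
    (sum_blkErr_gen hn hm hσ hB hvu hb hz)

lemma base_bound {n : ℕ} (hn : 0 < n) {σ : ℕ → ℕ} (hσ : Set.BijOn σ (Set.Iio n) (Set.Iio n))
    (u v w z : ℕ) (hv : v ≤ n) (hz : z ≤ n) :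
    |((cnt σ (Finset.Ico u v) (Finset.Ico w z)) : ℝ)
      - ((v - u : ℕ):ℝ) * ((z - w : ℕ):ℝ) / (n:ℝ)| ≤ (n:ℝ) - 1 := by
  have hnR : (0:ℝ) < n := by exact_mod_cast hn
  have hn1 : (1:ℝ) ≤ (n:ℝ) := by exact_mod_cast hn
  by_cases hbig : v - u = n ∧ z - w = n
  · have hu : u = 0 := by omega
    have hv' : v = n := by omega
    have hw : w = 0 := by omega
    have hz' : z = n := by omega
    rw [hu, hv', hw, hz', cnt_full hσ le_rfl, Nat.card_Ico, Nat.sub_zero]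
    have he : (n:ℝ) - (n:ℝ)*(n:ℝ)/(n:ℝ) = 0 := by field_simp; ring
    rw [he, abs_zero]
    linarith
  · have hc1 : cnt σ (Finset.Ico u v) (Finset.Ico w z) ≤ v - u := by
      calc cnt σ (Finset.Ico u v) (Finset.Ico w z)
          ≤ ((Finset.Ico u v).image σ).card := Finset.card_le_card Finset.inter_subset_left
      _ ≤ (Finset.Ico u v).card := Finset.card_image_le
      _ = v - u := Nat.card_Ico _ _
    have hc2 : cnt σ (Finset.Ico u v) (Finset.Ico w z) ≤ z - w := by
      calc cnt σ (Finset.Ico u v) (Finset.Ico w z)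
          ≤ (Finset.Ico w z).card := Finset.card_le_card Finset.inter_subset_right
      _ = z - w := Nat.card_Ico _ _
    set C := cnt σ (Finset.Ico u v) (Finset.Ico w z) with hC
    have hC0 : (0:ℝ) ≤ (C:ℝ) := Nat.cast_nonneg _
    have hc1R : (C:ℝ) ≤ ((v - u : ℕ):ℝ) := by exact_mod_cast hc1
    have hc2R : (C:ℝ) ≤ ((z - w : ℕ):ℝ) := by exact_mod_cast hc2
    have hL1n : ((v - u : ℕ):ℝ) ≤ (n:ℝ) := by exact_mod_cast (by omega : v - u ≤ n)
    have hL2n : ((z - w : ℕ):ℝ) ≤ (n:ℝ) := by exact_mod_cast (by omega : z - w ≤ n)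
    have hL10 : (0:ℝ) ≤ ((v - u : ℕ):ℝ) := Nat.cast_nonneg _
    have hL20 : (0:ℝ) ≤ ((z - w : ℕ):ℝ) := Nat.cast_nonneg _
    have ht0 : (0:ℝ) ≤ ((v - u : ℕ):ℝ) * ((z - w : ℕ):ℝ) / (n:ℝ) := by positivity
    have ht1 : ((v - u : ℕ):ℝ) * ((z - w : ℕ):ℝ) / (n:ℝ) ≤ ((v - u : ℕ):ℝ) := by
      rw [div_le_iff₀ hnR]
      nlinarith
    have ht2 : ((v - u : ℕ):ℝ) * ((z - w : ℕ):ℝ) / (n:ℝ) ≤ ((z - w : ℕ):ℝ) := by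
      rw [div_le_iff₀ hnR]
      nlinarith
    have hmin : v - u ≤ n - 1 ∨ z - w ≤ n - 1 := by omega
    rw [abs_le]
    rcases hmin with hm | hm
    · have : ((v - u : ℕ):ℝ) ≤ (n:ℝ) - 1 := by
        have : ((v-u : ℕ):ℝ) + 1 ≤ (n:ℝ) := by exact_mod_cast (by omega : v - u + 1 ≤ n)
        linarith
      constructor <;> linarith
    · have : ((z - w : ℕ):ℝ) ≤ (n:ℝ) - 1 := by
        have : ((z-w : ℕ):ℝ) + 1 ≤ (n:ℝ) := by exact_mod_cast (by omega : z - w + 1 ≤ n)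
        linarith
      constructor <;> linarith

lemma Bnd_base {n : ℕ} (hn : 0 < n) {σ : ℕ → ℕ} (hσ : Set.BijOn σ (Set.Iio n) (Set.Iio n)) :
    Bnd n σ ((n:ℝ) - 1) :=
  fun u v w z hv hz _ => base_bound hn hσ u v w z hv hz

lemma disc_Ico {N : ℕ} {π : ℕ → ℕ} (hπinj : Set.InjOn π (Set.Iio N)) {a b w z : ℕ}
    (hb : b ≤ N) (hz : z ≤ N) :
    disc N ((Finset.Ico a b).image π) (Finset.Ico w z)
      = |((cnt π (Finset.Ico a b) (Finset.Ico w z)) : ℝ)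
          - ((b-a:ℕ):ℝ) * ((z-w:ℕ):ℝ) / (N:ℝ)| := by
  rw [disc, cnt, Finset.card_image_of_injOn (hπinj.mono (fun x hx => by
    simp only [Finset.coe_Ico, Set.mem_Ico] at hx
    exact lt_of_lt_of_le hx.2 hb)), Nat.card_Ico, Nat.card_Ico]

lemma disc_compl_left {N : ℕ} (hN : 0 < N) {S T : Finset ℕ}
    (hS : S ⊆ Finset.Ico 0 N) (hT : T ⊆ Finset.Ico 0 N) :
    disc N (Finset.Ico 0 N \ S) T = disc N S T := by
  have hNR : (0:ℝ) < N := by exact_mod_cast hN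
  have e1 : (Finset.Ico 0 N \ S) ∩ T = T \ (S ∩ T) := by
    ext x
    simp only [Finset.mem_inter, Finset.mem_sdiff, Finset.mem_Ico]
    constructor
    · rintro ⟨⟨_, hxS⟩, hxT⟩; exact ⟨hxT, fun h => hxS h.1⟩
    · rintro ⟨hxT, hx2⟩
      have := hT hxT
      simp only [Finset.mem_Ico] at this
      exact ⟨⟨this, fun h => hx2 ⟨h, hxT⟩⟩, hxT⟩
  have c1 : ((Finset.Ico 0 N \ S) ∩ T).card = T.card - (S ∩ T).card := by
    rw [e1, Finset.card_sdiff_of_subset Finset.inter_subset_right]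
  have c2 : (Finset.Ico 0 N \ S).card = N - S.card := by
    rw [Finset.card_sdiff_of_subset hS, Nat.card_Ico, Nat.sub_zero]
  have hc3 : (S ∩ T).card ≤ T.card := Finset.card_le_card Finset.inter_subset_right
  have hc4 : S.card ≤ N := by
    have := Finset.card_le_card hS
    rwa [Nat.card_Ico, Nat.sub_zero] at this
  rw [disc, disc, c1, c2]
  rw [Nat.cast_sub hc3, Nat.cast_sub hc4]
  rw [show ((T.card:ℝ) - (S ∩ T).card) - ((N:ℝ) - S.card) * T.card / N
      = -(((S ∩ T).card:ℝ) - (S.card:ℝ) * T.card / N) by field_simp; ring]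
  rw [abs_neg]

lemma disc_compl_right {N : ℕ} (hN : 0 < N) {S T : Finset ℕ}
    (hS : S ⊆ Finset.Ico 0 N) (hT : T ⊆ Finset.Ico 0 N) :
    disc N S (Finset.Ico 0 N \ T) = disc N S T := by
  have hNR : (0:ℝ) < N := by exact_mod_cast hN
  have e1 : S ∩ (Finset.Ico 0 N \ T) = S \ (S ∩ T) := by
    ext x
    simp only [Finset.mem_inter, Finset.mem_sdiff, Finset.mem_Ico]
    constructor
    · rintro ⟨hxS, _, hxT⟩; exact ⟨hxS, fun h => hxT h.2⟩
    · rintro ⟨hxS, hx2⟩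
      have := hS hxS
      simp only [Finset.mem_Ico] at this
      exact ⟨hxS, this, fun h => hx2 ⟨hxS, h⟩⟩
  have c1 : (S ∩ (Finset.Ico 0 N \ T)).card = S.card - (S ∩ T).card := by
    rw [e1, Finset.card_sdiff_of_subset Finset.inter_subset_left]
  have c2 : (Finset.Ico 0 N \ T).card = N - T.card := by
    rw [Finset.card_sdiff_of_subset hT, Nat.card_Ico, Nat.sub_zero]
  have hc3 : (S ∩ T).card ≤ S.card := Finset.card_le_card Finset.inter_subset_left
  have hc4 : T.card ≤ N := by
    have := Finset.card_le_card hT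
    rwa [Nat.card_Ico, Nat.sub_zero] at this
  rw [disc, disc, c1, c2]
  rw [Nat.cast_sub hc3, Nat.cast_sub hc4]
  rw [show ((S.card:ℝ) - (S ∩ T).card) - (S.card:ℝ) * ((N:ℝ) - T.card) / N
      = -(((S ∩ T).card:ℝ) - (S.card:ℝ) * T.card / N) by field_simp; ring]
  rw [abs_neg]

lemma image_sdiff_of_bijOn {N : ℕ} {π : ℕ → ℕ}
    (hπ : Set.BijOn π (Set.Iio N) (Set.Iio N)) {I : Finset ℕ} (hI : I ⊆ Finset.Ico 0 N) :
    (Finset.Ico 0 N \ I).image π = Finset.Ico 0 N \ I.image π := by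
  have hIio : ∀ x : ℕ, x ∈ Finset.Ico 0 N ↔ x < N := fun x => by simp [Finset.mem_Ico]
  have hsub : (Finset.Ico 0 N \ I).image π ⊆ Finset.Ico 0 N \ I.image π := by
    intro y hy
    obtain ⟨x, hx, rfl⟩ := Finset.mem_image.mp hy
    obtain ⟨hxU, hxI⟩ := Finset.mem_sdiff.mp hx
    rw [Finset.mem_sdiff]
    constructor
    · rw [hIio]
      exact hπ.mapsTo ((hIio x).mp hxU)
    · intro hmem
      obtain ⟨x', hx', hxx⟩ := Finset.mem_image.mp hmem
      have : x' = x := hπ.injOn ((hIio x').mp (hI hx')) ((hIio x).mp hxU) hxx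
      exact hxI (this ▸ hx')
  apply Finset.eq_of_subset_of_card_le hsub
  have c1 : ((Finset.Ico 0 N \ I).image π).card = N - I.card := by
    rw [Finset.card_image_of_injOn (hπ.injOn.mono (fun x hx => by
      simp only [Finset.mem_coe, Finset.mem_sdiff] at hx
      exact (hIio x).mp hx.1))]
    rw [Finset.card_sdiff_of_subset hI, Nat.card_Ico, Nat.sub_zero]
  have c2 : (Finset.Ico 0 N \ I.image π).card = N - I.card := by
    rw [Finset.card_sdiff_of_subset (by
      intro y hy
      obtain ⟨x, hx, rfl⟩ := Finset.mem_image.mp hy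
      rw [hIio]
      exact hπ.mapsTo ((hIio x).mp (hI hx)))]
    rw [Finset.card_image_of_injOn (hπ.injOn.mono (fun x hx => by
      simp only [Finset.mem_coe] at hx
      exact (hIio x).mp (hI hx)))]
    rw [Nat.card_Ico, Nat.sub_zero]
  rw [c1, c2]

lemma cycInt_cases {N a len : ℕ} (hN : 0 < N) (hlen : len ≤ N) :
    (∃ u v, v ≤ N ∧ cycInt N a len = Finset.Ico u v) ∨
    (∃ u v, v ≤ N ∧ cycInt N a len = Finset.Ico 0 N \ Finset.Ico u v) := by
  have haN : a % N < N := Nat.mod_lt _ hN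
  have hmod : ∀ i, i < N → (a + i) % N = (a % N + i) % N := by
    intro i hi
    rw [Nat.add_mod, Nat.mod_eq_of_lt hi]
  by_cases hcase : a % N + len ≤ N
  · left
    refine ⟨a % N, a % N + len, hcase, ?_⟩
    ext x
    simp only [cycInt, Finset.mem_image, Finset.mem_range, Finset.mem_Ico]
    constructor
    · rintro ⟨i, hi, rfl⟩
      have e1 : (a + i) % N = (a % N + i) % N := hmod i (by omega)
      have e2 : (a % N + i) % N = a % N + i := Nat.mod_eq_of_lt (by omega)
      rw [e1, e2]
      omega
    · rintro ⟨h1, h2⟩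
      refine ⟨x - a % N, by omega, ?_⟩
      have e1 : (a + (x - a % N)) % N = (a % N + (x - a % N)) % N := hmod _ (by omega)
      have e2 : (a % N + (x - a % N)) % N = a % N + (x - a % N) := Nat.mod_eq_of_lt (by omega)
      rw [e1, e2]
      omega
  · right
    refine ⟨a % N + len - N, a % N, by omega, ?_⟩
    ext x
    simp only [cycInt, Finset.mem_image, Finset.mem_range, Finset.mem_sdiff, Finset.mem_Ico]
    constructor
    · rintro ⟨i, hi, rfl⟩
      have e1 : (a + i) % N = (a % N + i) % N := hmod i (by omega)
      rw [e1]
      rcases Nat.lt_or_ge (a % N + i) N with hlt | hge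
      · have e2 : (a % N + i) % N = a % N + i := Nat.mod_eq_of_lt hlt
        rw [e2]
        omega
      · have e2 : (a % N + i) % N = a % N + i - N := by
          have h2 : a % N + i - N < N := by omega
          rw [Nat.mod_eq_sub_mod hge, Nat.mod_eq_of_lt h2]
        rw [e2]
        omega
    · rintro ⟨⟨_, hxN⟩, hnot⟩
      rcases Nat.lt_or_ge x (a % N + len - N) with hsmall | hbig
      · refine ⟨x + N - a % N, by omega, ?_⟩
        have e1 : (a + (x + N - a % N)) % N = (a % N + (x + N - a % N)) % N := hmod _ (by omega)
        have h3 : a % N + (x + N - a % N) = x + N := by omega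
        rw [e1, h3, Nat.add_mod_right, Nat.mod_eq_of_lt hxN]
      · have hxv : a % N ≤ x := by omega
        refine ⟨x - a % N, by omega, ?_⟩
        have e1 : (a + (x - a % N)) % N = (a % N + (x - a % N)) % N := hmod _ (by omega)
        have e2 : (a % N + (x - a % N)) % N = a % N + (x - a % N) := Nat.mod_eq_of_lt (by omega)
        rw [e1, e2]
        omega

lemma image_Ico_subset {N : ℕ} {π : ℕ → ℕ} (hπ : Set.MapsTo π (Set.Iio N) (Set.Iio N))
    {u v : ℕ} (hv : v ≤ N) : (Finset.Ico u v).image π ⊆ Finset.Ico 0 N := by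
  intro y hy
  obtain ⟨x, hx, rfl⟩ := Finset.mem_image.mp hy
  simp only [Finset.mem_Ico] at hx ⊢
  exact ⟨Nat.zero_le _, hπ (by omega : x < N)⟩

lemma disc_le_of_cnt {N : ℕ} (hN : 0 < N) {π : ℕ → ℕ}
    (hπ : Set.BijOn π (Set.Iio N) (Set.Iio N)) {D : ℝ}
    (hD : ∀ a b w z : ℕ, b ≤ N → z ≤ N →
      |((cnt π (Finset.Ico a b) (Finset.Ico w z)) : ℝ)
        - ((b-a:ℕ):ℝ) * ((z-w:ℕ):ℝ) / (N:ℝ)| ≤ D)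
    (a₁ l₁ a₂ l₂ : ℕ) (h1 : l₁ ≤ N) (h2 : l₂ ≤ N) :
    disc N ((cycInt N a₁ l₁).image π) (cycInt N a₂ l₂) ≤ D := by
  have key : ∀ u v w z : ℕ, v ≤ N → z ≤ N →
      disc N ((Finset.Ico u v).image π) (Finset.Ico w z) ≤ D := by
    intro u v w z hv hz
    rw [disc_Ico hπ.injOn hv hz]
    exact hD u v w z hv hz
  have key2 : ∀ u v w z : ℕ, v ≤ N → z ≤ N →
      disc N ((Finset.Ico u v).image π) (Finset.Ico 0 N \ Finset.Ico w z) ≤ D := by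
    intro u v w z hv hz
    rw [disc_compl_right hN (image_Ico_subset hπ.mapsTo hv)
      (Finset.Ico_subset_Ico (Nat.zero_le _) hz)]
    exact key u v w z hv hz
  rcases cycInt_cases (a := a₁) hN h1 with ⟨u, v, hv, hEqI⟩ | ⟨u, v, hv, hEqI⟩ <;>
    rcases cycInt_cases (a := a₂) hN h2 with ⟨w, zz, hz, hEqJ⟩ | ⟨w, zz, hz, hEqJ⟩
  · rw [hEqI, hEqJ]; exact key u v w zz hv hz
  · rw [hEqI, hEqJ]; exact key2 u v w zz hv hz
  · rw [hEqI, hEqJ, image_sdiff_of_bijOn hπ (Finset.Ico_subset_Ico (Nat.zero_le _) hv),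
      disc_compl_left hN (image_Ico_subset hπ.mapsTo hv)
        (Finset.Ico_subset_Ico (Nat.zero_le _) hz)]
    exact key u v w zz hv hz
  · rw [hEqI, hEqJ, image_sdiff_of_bijOn hπ (Finset.Ico_subset_Ico (Nat.zero_le _) hv),
      disc_compl_left hN (image_Ico_subset hπ.mapsTo hv) Finset.sdiff_subset]
    rw [disc_compl_right hN (image_Ico_subset hπ.mapsTo hv)
      (Finset.Ico_subset_Ico (Nat.zero_le _) hz)]
    exact key u v w zz hv hz

lemma DFull_le_of_cnt {N : ℕ} (hN : 0 < N) {π : ℕ → ℕ}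
    (hπ : Set.BijOn π (Set.Iio N) (Set.Iio N)) {D : ℝ}
    (hD : ∀ a b w z : ℕ, b ≤ N → z ≤ N →
      |((cnt π (Finset.Ico a b) (Finset.Ico w z)) : ℝ)
        - ((b-a:ℕ):ℝ) * ((z-w:ℕ):ℝ) / (N:ℝ)| ≤ D) :
    DFull N π ≤ D := by
  apply Real.sSup_le
  · rintro x ⟨a₁, l₁, a₂, l₂, h1, h2, rfl⟩
    exact disc_le_of_cnt hN hπ hD a₁ l₁ a₂ l₂ h1 h2
  · calc (0:ℝ) ≤ |((cnt π (Finset.Ico 0 0) (Finset.Ico 0 0)) : ℝ)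
        - ((0-0:ℕ):ℝ) * ((0-0:ℕ):ℝ) / (N:ℝ)| := abs_nonneg _
    _ ≤ D := hD 0 0 0 0 (Nat.zero_le _) (Nat.zero_le _)

lemma prodPerm_concat (L : List (ℕ × (ℕ → ℕ))) (p : ℕ × (ℕ → ℕ)) :
    prodPerm (L ++ [p]) = ((prodPerm L).1 * p.1,
      otimes (prodPerm L).1 p.1 (prodPerm L).2 p.2) := by
  rw [prodPerm, List.foldl_append]
  rfl

lemma prod_invariant : ∀ (l : List (ℕ × (ℕ → ℕ))),
    (∀ p ∈ l, 1 < p.1 ∧ Set.BijOn p.2 (Set.Iio p.1) (Set.Iio p.1)) →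
    0 < (prodPerm l).1 ∧
    Set.BijOn (prodPerm l).2 (Set.Iio (prodPerm l).1) (Set.Iio (prodPerm l).1) ∧
    Bnd (prodPerm l).1 (prodPerm l).2 (((l.map Prod.fst).sum : ℝ) - (l.length : ℝ)) := by
  intro l
  induction l using List.reverseRecOn with
  | nil =>
    intro _
    refine ⟨Nat.one_pos, Set.bijOn_id _, ?_⟩
    have hbase := Bnd_base Nat.one_pos (Set.bijOn_id (Set.Iio 1))
    have he : ((1:ℕ):ℝ) - 1 = ((([] : List (ℕ × (ℕ → ℕ))).map Prod.fst).sum : ℝ)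
        - (([] : List (ℕ × (ℕ → ℕ))).length : ℝ) := by simp
    rw [← he]
    exact hbase
  | append_singleton L p ih =>
    intro h
    have hmem : ∀ q ∈ L, 1 < q.1 ∧ Set.BijOn q.2 (Set.Iio q.1) (Set.Iio q.1) :=
      fun q hq => h q (by simp [hq])
    obtain ⟨hN, hbij, hBnd⟩ := ih hmem
    have hp := h p (by simp)
    have hm : 0 < p.1 := by omega
    rw [prodPerm_concat]
    refine ⟨Nat.mul_pos hN hm, otimes_bijOn hN hm hbij hp.2, ?_⟩
    have hstep := Bnd_step hN hm hbij hp.2 hBnd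
    have he : (((L.map Prod.fst).sum : ℕ):ℝ) - (L.length : ℝ) + (((p.1:ℕ):ℝ) - 1)
        = ((((L ++ [p]).map Prod.fst).sum : ℕ):ℝ) - (((L ++ [p]).length : ℕ):ℝ) := by
      simp only [List.map_append, List.sum_append, List.length_append, List.map_cons,
        List.map_nil, List.sum_cons, List.sum_nil, List.length_cons, List.length_nil]
      push_cast
      ring
    rw [← he]
    exact hstep

theorem DFull_prodPerm (l : List (ℕ × (ℕ → ℕ))) (hne : l ≠ [])
    (h : ∀ p ∈ l, 1 < p.1 ∧ Set.BijOn p.2 (Set.Iio p.1) (Set.Iio p.1)) :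
    DFull (prodPerm l).1 (prodPerm l).2
      ≤ 2 * ((l.map Prod.fst).sum : ℝ) - ((l.getLast hne).1 : ℝ)
          - 2 * (l.length : ℝ) + 1 := by
  rcases List.eq_nil_or_concat l with rfl | ⟨L, p, hl⟩
  · exact absurd rfl hne
  subst hl
  have hgen : ∀ (l' : List (ℕ × (ℕ → ℕ))) (h' : l' ≠ []), l' = L ++ [p] → l'.getLast h' = p := by
    rintro l' h' rfl
    exact List.getLast_concat
  have hlast : ((L.concat p).getLast hne) = p := hgen _ hne List.concat_eq_append
  rw [hlast]
  rw [List.concat_eq_append] at h ⊢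
  have hmem : ∀ q ∈ L, 1 < q.1 ∧ Set.BijOn q.2 (Set.Iio q.1) (Set.Iio q.1) :=
    fun q hq => h q (by simp [hq])
  obtain ⟨hN, hbij, hBnd⟩ := prod_invariant L hmem
  have hp := h p (by simp)
  have hm : 0 < p.1 := by omega
  rw [prodPerm_concat]
  have hbound := DFull_le_of_cnt (N := (prodPerm L).1 * p.1) (Nat.mul_pos hN hm)
    (otimes_bijOn hN hm hbij hp.2)
    (fun a b w z hb hz => gen_step hN hm hbij hp.2 hBnd a b w z hb hz)
  refine le_trans hbound (le_of_eq ?_)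
  simp only [List.map_append, List.sum_append, List.length_append, List.map_cons,
    List.map_nil, List.sum_cons, List.sum_nil, List.length_cons, List.length_nil]
  push_cast
  ring
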